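/- Let v satisfy (λ̄²p²(1−p)²/2)v'' + λ̄²(1−p)²p v' − rv + c − (λ̄−λ̲)² = 0 on an interval I ⊆ (0,1), let f(p) = p(1−p)v'(p), and suppose v'(p₂) > 0 and f'(p₂) = 0 at some p₂ ∈ I where v is three times differentiable with the ODE differentiable. Then f''(p₂) = 2r·v'(p₂)/(p₂(1−p₂)λ̄²) > 0; in particular every critical point of f in I with v' > 0 is a strict local minimum. -/
import Mathlib


theorem stmt10 (r c l L p2 ε f'' : ℝ) (v v' v'' v''' f' : ℝ → ℝ)
    (hr : 0 < r) (hc : 0 < c) (hl : 0 < l) (hlL : l < L)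
    (hp : p2 ∈ Set.Ioo (0:ℝ) 1) (hε : 0 < ε)
    (hball : Metric.ball p2 ε ⊆ Set.Ioo (0:ℝ) 1)
    (hd1 : ∀ q ∈ Metric.ball p2 ε, HasDerivAt v (v' q) q)
    (hd2 : ∀ q ∈ Metric.ball p2 ε, HasDerivAt v' (v'' q) q)
    (hd3 : ∀ q ∈ Metric.ball p2 ε, HasDerivAt v'' (v''' q) q)
    (hODE : ∀ q ∈ Metric.ball p2 ε,
      L^2*q^2*(1-q)^2/2 * v'' q + L^2*(1-q)^2*q * v' q - r * v q + c - (L-l)^2 = 0)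
    (hdf : ∀ q ∈ Metric.ball p2 ε,
      HasDerivAt (fun x => x*(1-x)*v' x) (f' q) q)
    (hdf2 : HasDerivAt f' f'' p2)
    (hcrit : f' p2 = 0) (hvpos : 0 < v' p2) :
    f'' = 2*r*v' p2/(p2*(1-p2)*L^2) ∧ 0 < f'' := by
  have hL : (0:ℝ) < L := lt_trans hl hlL
  obtain ⟨hp0, hp1⟩ := hp
  have hp2mem : p2 ∈ Metric.ball p2 ε := Metric.mem_ball_self hε
  set g : ℝ → ℝ := fun q =>
    (-v' q * (L^2*q*(1-q)) + 2*(r*v q - c + (L-l)^2)) / (L^2*q*(1-q)) with hg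
  -- f' = g on the ball
  have hf'g : ∀ q ∈ Metric.ball p2 ε, f' q = g q := by
    intro q hqm
    obtain ⟨hq0, hq1⟩ := hball hqm
    have hq1' : (0:ℝ) < 1 - q := by linarith
    have hne : L^2*q*(1-q) ≠ 0 := by positivity
    have hd0 : HasDerivAt (fun x : ℝ => x*(1-x)*v' x)
        ((1*(1-q) + q*(0-1))*v' q + q*(1-q)*v'' q) q :=
      ((hasDerivAt_id q).mul ((hasDerivAt_const q (1:ℝ)).sub (hasDerivAt_id q))).mul (hd2 q hqm)
    have huniq := (hdf q hqm).unique hd0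
    have hODEq := hODE q hqm
    rw [hg]
    simp only
    rw [eq_div_iff hne, huniq]
    linear_combination 2*hODEq
  -- g has derivative f'' at p2
  have hgd : HasDerivAt g f'' p2 := by
    apply hdf2.congr_of_eventuallyEq
    filter_upwards [Metric.ball_mem_nhds p2 hε] with q hq
    exact (hf'g q hq).symm
  -- compute derivative of g at p2 directly
  have hq1' : (0:ℝ) < 1 - p2 := by linarith
  have hne : L^2*p2*(1-p2) ≠ 0 := by positivity
  have hD0 : HasDerivAt (fun q : ℝ => L^2*q*(1-q))
      ((0*p2 + L^2*1)*(1-p2) + L^2*p2*(0-1)) p2 :=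
    ((hasDerivAt_const p2 (L^2)).mul (hasDerivAt_id p2)).mul
      ((hasDerivAt_const p2 (1:ℝ)).sub (hasDerivAt_id p2))
  have hD' : HasDerivAt (fun q : ℝ => L^2*q*(1-q)) (L^2*(1-2*p2)) p2 := by
    convert hD0 using 1; ring
  have hN : HasDerivAt (fun q => -v' q * (L^2*q*(1-q)) + 2*(r*v q - c + (L-l)^2))
      (-(v'' p2) * (L^2*p2*(1-p2)) + -v' p2 * (L^2*(1-2*p2)) + 2*(r*v' p2)) p2 := by
    have hin : HasDerivAt (fun x => r * v x - c + (L-l)^2) (r * v' p2) p2 :=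
      (((hd1 p2 hp2mem).const_mul r).sub_const c).add_const ((L-l)^2)
    exact ((hd2 p2 hp2mem).neg.mul hD').add (hin.const_mul 2)
  have hgd2 : HasDerivAt g
      (((-(v'' p2) * (L^2*p2*(1-p2)) + -v' p2 * (L^2*(1-2*p2)) + 2*(r*v' p2)) * (L^2*p2*(1-p2))
        - (-v' p2 * (L^2*p2*(1-p2)) + 2*(r*v p2 - c + (L-l)^2)) * (L^2*(1-2*p2)))
        / (L^2*p2*(1-p2))^2) p2 := hN.div hD' hne
  have hval := hgd.unique hgd2
  -- algebraic simplification
  have hODEp := hODE p2 hp2mem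
  have hcrit' : -v' p2 * (L^2*p2*(1-p2)) + 2*(r*v p2 - c + (L-l)^2) = 0 := by
    have h := hf'g p2 hp2mem
    rw [hcrit, hg] at h
    simp only at h
    field_simp at h
    linarith [h]
  have hmain : f'' = 2*r*v' p2/(p2*(1-p2)*L^2) := by
    rw [hval]
    rw [div_eq_div_iff (by positivity) (by positivity)]
    linear_combination (-2*L^4*p2*(1-p2)) * hODEp + (-2*L^4*p2*(1-p2)^2) * hcrit'
  refine ⟨hmain, ?_⟩
  rw [hmain]
  positivity
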